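/- (Variance of a wavelet coefficient of fractional Brownian motion.) Let X be a fractional Brownian motion with parameters (H,σ), H ∈ (0,1), σ > 0, and let ψ satisfy the wavelet assumptions. Then for every j ≥ 0 and every k ∈ ℤ, Var(d_{j,k}) = σ²·c(ψ,H)·κ(H)·2^{−j(1+2H)}, where c(ψ,H) := (1/2)∫∫ ψ(s)ψ(t)(|t|^{2H} + |s|^{2H} − |t−s|^{2H}) ds dt; in particular Var(d_{j,k}) does not depend on k. -/

import Mathlib

open MeasureTheory ProbabilityTheory Real Filter
open scoped NNReal ENNReal

noncomputable section

/-- The constant `κ(H) = π / (H Γ(2H) sin(πH))`. -/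
def kappa (H : ℝ) : ℝ := π / (H * Real.Gamma (2 * H) * Real.sin (π * H))

/-- `X` is a fractional Brownian motion with Hurst parameter `H` and scale `σ`
under the probability measure `P`. -/
structure IsFBM {Ω : Type*} [MeasurableSpace Ω] (P : Measure Ω)
    (X : ℝ → Ω → ℝ) (H σ : ℝ) : Prop where
  meas : ∀ t, Measurable (X t)
  cont : ∀ ω, Continuous fun t => X t ω
  gauss : ∀ (m : ℕ) (t c : Fin m → ℝ), ∃ v : NNReal,
      P.map (fun ω => ∑ i, c i * X (t i) ω) = gaussianReal 0 v
  cov : ∀ s t : ℝ, ∫ ω, X s ω * X t ω ∂P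
      = σ ^ 2 * kappa H / 2 * (|s| ^ (2 * H) + |t| ^ (2 * H) - |s - t| ^ (2 * H))

/-- Wavelet assumptions: bounded, measurable, supported in `[0,S]`, not a.e. zero,
two vanishing moments. -/
structure IsWavelet (ψ : ℝ → ℝ) (S : ℕ) : Prop where
  hS : 1 ≤ S
  meas : Measurable ψ
  bdd : ∃ C, ∀ t, |ψ t| ≤ C
  supp : ∀ t : ℝ, t ∉ Set.Icc (0 : ℝ) (S : ℝ) → ψ t = 0
  nonzero : ¬ (∀ᵐ t ∂(volume : Measure ℝ), ψ t = 0)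
  van0 : ∫ t, ψ t = 0
  van1 : ∫ t, t * ψ t = 0

/-- `ψ_{j,k}(t) = 2^{j/2} ψ(2^j t - k)`. -/
def wavFn (ψ : ℝ → ℝ) (j : ℕ) (k : ℤ) (t : ℝ) : ℝ :=
  (2 : ℝ) ^ ((j : ℝ) / 2) * ψ ((2 : ℝ) ^ j * t - (k : ℝ))

/-- The random wavelet coefficient `d_{j,k} = ∫ ψ_{j,k}(s) X_s ds`. -/
def dcoef {Ω : Type*} (ψ : ℝ → ℝ) (X : ℝ → Ω → ℝ) (j : ℕ) (k : ℤ) (ω : Ω) : ℝ :=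
  ∫ s, wavFn ψ j k s * X s ω

/-- The energy level `Q_j = ∑_{k=0}^{2^{j-1}-1} d_{j,k}^2`. -/
def energy {Ω : Type*} (ψ : ℝ → ℝ) (X : ℝ → Ω → ℝ) (j : ℕ) (ω : Ω) : ℝ :=
  ∑ k ∈ Finset.range (2 ^ (j - 1)), (dcoef ψ X j (k : ℤ) ω) ^ 2


/-- `c(ψ,H) = (1/2)∫∫ ψ(s)ψ(t)(|t|^{2H}+|s|^{2H}-|t-s|^{2H}) ds dt`. -/
def cpsi (ψ : ℝ → ℝ) (H : ℝ) : ℝ :=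
  (1 / 2) * ∫ s : ℝ, ∫ t : ℝ,
    ψ s * ψ t * (|t| ^ (2 * H) + |s| ^ (2 * H) - |t - s| ^ (2 * H))

section Helpers

lemma integrable_of_bdd_supp {α : Type*} [MeasurableSpace α] {μ : Measure α}
    {f : α → ℝ} (hf : AEStronglyMeasurable f μ)
    {s : Set α} (hs : MeasurableSet s) (hμs : μ s < ⊤) {D : ℝ}
    (hbd : ∀ x ∈ s, |f x| ≤ D) (hsupp : ∀ x ∉ s, f x = 0) :
    Integrable f μ := by
  refine Integrable.mono' (g := s.indicator fun _ => D)
    ((integrable_indicator_iff hs).2 ?_) hf ?_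
  · exact integrableOn_const hμs.ne
  · refine Filter.Eventually.of_forall fun x => ?_
    by_cases hx : x ∈ s
    · rw [Set.indicator_of_mem hx, Real.norm_eq_abs]; exact hbd x hx
    · rw [Set.indicator_of_notMem hx, Real.norm_eq_abs, hsupp x hx]
      simp

lemma variance_eq_integral_sq {Ω : Type*} [MeasurableSpace Ω] {P : Measure Ω}
    {W : Ω → ℝ} (hmean : ∫ ω, W ω ∂P = 0)
    (hint : Integrable (fun ω => W ω ^ 2) P) :
    variance W P = ∫ ω, W ω ^ 2 ∂P := by
  rw [variance, evariance_eq_lintegral_ofReal]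
  simp only [hmean, sub_zero]
  rw [← ofReal_integral_eq_lintegral_ofReal hint
      (Filter.Eventually.of_forall fun ω => sq_nonneg _),
    ENNReal.toReal_ofReal (integral_nonneg fun ω => sq_nonneg _)]

lemma integral_id_gaussianReal_zero (v : ℝ≥0) : ∫ x, x ∂(gaussianReal 0 v) = 0 := by
  have h1 : (⟨(-1:ℝ)^2, sq_nonneg _⟩ : ℝ≥0) = 1 := by ext; norm_num
  have hmap : (gaussianReal 0 v).map (fun x => (-1 : ℝ) * x) = gaussianReal 0 v := by
    rw [gaussianReal_map_const_mul, mul_zero]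
    congr 1; ext; simp
  have h : ∫ y, y ∂((gaussianReal 0 v).map (fun x => (-1:ℝ) * x))
      = ∫ x, (-1:ℝ) * x ∂(gaussianReal 0 v) :=
    integral_map (by fun_prop) aestronglyMeasurable_id
  rw [hmap] at h
  simp only [neg_one_mul] at h
  rw [integral_neg] at h
  linarith

lemma mul3_le {x y z X Y Z : ℝ} (hx : x ≤ X) (hy : y ≤ Y) (hz : z ≤ Z)
    (hy0 : 0 ≤ y) (hz0 : 0 ≤ z) (hX0 : 0 ≤ X) (hY0 : 0 ≤ Y) :
    x * y * z ≤ X * Y * Z :=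
  mul_le_mul (mul_le_mul hx hy hy0 hX0) hz hz0 (mul_nonneg hX0 hY0)

lemma key_double_integral (ψ : ℝ → ℝ) (S : ℕ) (hmeas : Measurable ψ)
    (C : ℝ) (hC : ∀ t, |ψ t| ≤ C)
    (hsupp : ∀ t : ℝ, t ∉ Set.Icc (0:ℝ) (S:ℝ) → ψ t = 0)
    (hvan : ∫ t, ψ t = 0)
    {H : ℝ} (h2H : 0 < 2 * H) (φ : ℝ → ℝ) (hφm : Measurable φ) (a : ℝ) (ha : 0 < a)
    (hφ_sub : ∀ u v : ℝ, φ u - φ v = (u - v) / a)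
    (Bφ : ℝ) (hBφ : ∀ u ∈ Set.Icc (0:ℝ) (S:ℝ), |φ u| ≤ Bφ) :
    (∫ p : ℝ × ℝ, ψ p.1 * ψ p.2 * (|φ p.1| ^ (2*H) + |φ p.2| ^ (2*H)
        - |φ p.1 - φ p.2| ^ (2*H)) ∂((volume : Measure ℝ).prod volume))
      = -((a ^ (2*H))⁻¹ * ∫ p : ℝ × ℝ,
          ψ p.1 * ψ p.2 * |p.1 - p.2| ^ (2*H) ∂((volume : Measure ℝ).prod volume))
    ∧ Integrable (fun p : ℝ × ℝ => ψ p.1 * ψ p.2 * (|φ p.1| ^ (2*H) + |φ p.2| ^ (2*H)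
        - |φ p.1 - φ p.2| ^ (2*H))) ((volume : Measure ℝ).prod volume) := by
  have hC0 : 0 ≤ C := (abs_nonneg _).trans (hC 0)
  have hS0 : (0:ℝ) ≤ (S:ℝ) := Nat.cast_nonneg S
  have hBφ0 : 0 ≤ Bφ := (abs_nonneg _).trans (hBφ 0 ⟨le_refl _, hS0⟩)
  set ν : Measure (ℝ × ℝ) := (volume : Measure ℝ).prod volume with hν
  set box : Set (ℝ × ℝ) := Set.Icc (0:ℝ) (S:ℝ) ×ˢ Set.Icc (0:ℝ) (S:ℝ) with hbox
  have hbox_meas : MeasurableSet box := measurableSet_Icc.prod measurableSet_Icc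
  have hbox_fin : ν box < ⊤ := by
    rw [hbox, hν, Measure.prod_prod, Real.volume_Icc]
    exact ENNReal.mul_lt_top ENNReal.ofReal_lt_top ENNReal.ofReal_lt_top
  have hrm : Measurable fun x : ℝ => |φ x| ^ (2*H) :=
    (Real.continuous_rpow_const h2H.le).measurable.comp hφm.abs
  set f1 : ℝ → ℝ := fun u => ψ u * |φ u| ^ (2*H) with hf1
  have hrbd : ∀ u ∈ Set.Icc (0:ℝ) (S:ℝ), |φ u| ^ (2*H) ≤ Bφ ^ (2*H) :=
    fun u hu => Real.rpow_le_rpow (abs_nonneg _) (hBφ u hu) h2H.le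
  have hT1 : Integrable (fun p : ℝ × ℝ => f1 p.1 * ψ p.2) ν := by
    refine integrable_of_bdd_supp ?_ hbox_meas hbox_fin
      (D := C * Bφ ^ (2*H) * C) ?_ ?_
    · exact (((hmeas.comp measurable_fst).mul (hrm.comp measurable_fst)).mul
        (hmeas.comp measurable_snd)).aestronglyMeasurable
    · rintro ⟨u, v⟩ ⟨hu, hv⟩
      have h1 : |ψ u * |φ u| ^ (2*H) * ψ v| = |ψ u| * |φ u| ^ (2*H) * |ψ v| := by
        rw [abs_mul, abs_mul, abs_of_nonneg (Real.rpow_nonneg (abs_nonneg _) _)]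
      rw [hf1, h1]
      exact mul3_le (hC u) (hrbd u hu) (hC v)
        (Real.rpow_nonneg (abs_nonneg _) _) (abs_nonneg _) hC0
        (Real.rpow_nonneg hBφ0 _)
    · rintro ⟨u, v⟩ hp
      rw [hbox, Set.mem_prod] at hp
      push_neg at hp
      by_cases hu : u ∈ Set.Icc (0:ℝ) (S:ℝ)
      · rw [hf1]; simp [hsupp v (hp hu)]
      · rw [hf1]; simp [hsupp u hu]
  have hT2 : Integrable (fun p : ℝ × ℝ => ψ p.1 * f1 p.2) ν := by
    refine integrable_of_bdd_supp ?_ hbox_meas hbox_fin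
      (D := C * (C * Bφ ^ (2*H))) ?_ ?_
    · exact ((hmeas.comp measurable_fst).mul ((hmeas.comp measurable_snd).mul
        (hrm.comp measurable_snd))).aestronglyMeasurable
    · rintro ⟨u, v⟩ ⟨hu, hv⟩
      have h1 : |ψ u * (ψ v * |φ v| ^ (2*H))| = |ψ u| * (|ψ v| * |φ v| ^ (2*H)) := by
        rw [abs_mul, abs_mul, abs_of_nonneg (Real.rpow_nonneg (abs_nonneg _) _)]
      rw [hf1, h1]
      exact mul_le_mul (hC u)
        (mul_le_mul (hC v) (hrbd v hv) (Real.rpow_nonneg (abs_nonneg _) _) hC0)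
        (mul_nonneg (abs_nonneg _) (Real.rpow_nonneg (abs_nonneg _) _)) hC0
    · rintro ⟨u, v⟩ hp
      rw [hbox, Set.mem_prod] at hp
      push_neg at hp
      by_cases hu : u ∈ Set.Icc (0:ℝ) (S:ℝ)
      · rw [hf1]; simp [hsupp v (hp hu)]
      · rw [hf1]; simp [hsupp u hu]
  have hT3 : Integrable (fun p : ℝ × ℝ =>
      ψ p.1 * ψ p.2 * |φ p.1 - φ p.2| ^ (2*H)) ν := by
    refine integrable_of_bdd_supp ?_ hbox_meas hbox_fin
      (D := C * C * ((S:ℝ)/a) ^ (2*H)) ?_ ?_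
    · exact (((hmeas.comp measurable_fst).mul (hmeas.comp measurable_snd)).mul
        ((Real.continuous_rpow_const h2H.le).measurable.comp
          ((hφm.comp measurable_fst).sub (hφm.comp measurable_snd)).abs)).aestronglyMeasurable
    · rintro ⟨u, v⟩ ⟨hu, hv⟩
      have hd : |φ u - φ v| ≤ (S:ℝ)/a := by
        rw [hφ_sub u v, abs_div, abs_of_pos ha]
        gcongr
        rw [abs_sub_le_iff]
        obtain ⟨h1, h2⟩ := hu; obtain ⟨h3, h4⟩ := hv
        constructor <;> linarith
      have hd2 : |φ u - φ v| ^ (2*H) ≤ ((S:ℝ)/a) ^ (2*H) :=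
        Real.rpow_le_rpow (abs_nonneg _) hd h2H.le
      have h1 : |ψ u * ψ v * |φ u - φ v| ^ (2*H)|
          = |ψ u| * |ψ v| * |φ u - φ v| ^ (2*H) := by
        rw [abs_mul, abs_mul, abs_of_nonneg (Real.rpow_nonneg (abs_nonneg _) _)]
      rw [h1]
      exact mul3_le (hC u) (hC v) hd2 (abs_nonneg _)
        (Real.rpow_nonneg (abs_nonneg _) _) hC0 hC0
    · rintro ⟨u, v⟩ hp
      rw [hbox, Set.mem_prod] at hp
      push_neg at hp
      by_cases hu : u ∈ Set.Icc (0:ℝ) (S:ℝ)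
      · simp [hsupp v (hp hu)]
      · simp [hsupp u hu]
  have hsplit : (fun p : ℝ × ℝ => ψ p.1 * ψ p.2 * (|φ p.1| ^ (2*H) + |φ p.2| ^ (2*H)
      - |φ p.1 - φ p.2| ^ (2*H)))
      = fun p : ℝ × ℝ => f1 p.1 * ψ p.2 + ψ p.1 * f1 p.2
        - ψ p.1 * ψ p.2 * |φ p.1 - φ p.2| ^ (2*H) := by
    funext p; rw [hf1]; ring
  have hT12 : Integrable (fun p : ℝ × ℝ =>
      f1 p.1 * ψ p.2 + ψ p.1 * f1 p.2) ν := hT1.add hT2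
  constructor
  · rw [hsplit, integral_sub hT12 hT3, integral_add hT1 hT2]
    have e1 : ∫ p : ℝ × ℝ, f1 p.1 * ψ p.2 ∂ν = 0 := by
      rw [hν, integral_prod_mul f1 ψ, hvan, mul_zero]
    have e2 : ∫ p : ℝ × ℝ, ψ p.1 * f1 p.2 ∂ν = 0 := by
      rw [hν, integral_prod_mul ψ f1, hvan, zero_mul]
    have e3 : ∫ p : ℝ × ℝ, ψ p.1 * ψ p.2 * |φ p.1 - φ p.2| ^ (2*H) ∂ν
        = (∫ p : ℝ × ℝ, ψ p.1 * ψ p.2 * |p.1 - p.2| ^ (2*H) ∂ν) * (a ^ (2*H))⁻¹ := by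
      have heq : ∀ p : ℝ × ℝ, ψ p.1 * ψ p.2 * |φ p.1 - φ p.2| ^ (2*H)
          = (ψ p.1 * ψ p.2 * |p.1 - p.2| ^ (2*H)) * (a ^ (2*H))⁻¹ := by
        intro p
        rw [hφ_sub p.1 p.2, abs_div, abs_of_pos ha,
          Real.div_rpow (abs_nonneg _) ha.le]
        ring
      simp_rw [heq]
      rw [integral_mul_const]
    rw [e1, e2, e3]
    ring
  · rw [hsplit]
    exact hT12.sub hT3

/-- integrability from an a.e. inner bound -/
lemma integrable_of_inner_bound {E : Type*} [MeasurableSpace E] {μE : Measure E}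
    [SFinite μE] {Ω : Type*} [MeasurableSpace Ω] {P : Measure Ω} [SFinite P]
    {G : Ω × E → ℝ} (hGm : Measurable G) {s : Set E} (hs : MeasurableSet s)
    (hμs : μE s ≠ ⊤) {K : ℝ≥0∞} (hK : K ≠ ⊤)
    (hbd : ∀ᵐ e ∂μE, (∫⁻ ω, ENNReal.ofReal ‖G (ω, e)‖ ∂P) ≤ s.indicator (fun _ => K) e) :
    Integrable G (P.prod μE) := by
  refine ⟨hGm.aestronglyMeasurable, ?_⟩
  rw [hasFiniteIntegral_iff_norm, lintegral_prod_symm _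
    (hGm.norm.ennreal_ofReal).aemeasurable]
  calc ∫⁻ e, ∫⁻ ω, ENNReal.ofReal ‖G (ω, e)‖ ∂P ∂μE
      ≤ ∫⁻ e, s.indicator (fun _ => K) e ∂μE := lintegral_mono_ae hbd
    _ = K * μE s := by rw [lintegral_indicator hs]; simp
    _ < ⊤ := ENNReal.mul_lt_top hK.lt_top hμs.lt_top

end Helpers

/-- Variance of a wavelet coefficient of fractional Brownian motion:
`Var(d_{j,k}) = σ² c(ψ,H) κ(H) 2^{-j(1+2H)}`, independently of `k`. -/
theorem variance_dcoef
    (H σ : ℝ) (hH : H ∈ Set.Ioo (0 : ℝ) 1) (hσ : 0 < σ)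
    (ψ : ℝ → ℝ) (S : ℕ) (hψ : IsWavelet ψ S)
    (Ω : Type) (_ : MeasurableSpace Ω) (P : Measure Ω) (hP : IsProbabilityMeasure P)
    (X : ℝ → Ω → ℝ) (hX : IsFBM P X H σ)
    (j : ℕ) (k : ℤ) :
    variance (dcoef ψ X j k) P
      = σ ^ 2 * cpsi ψ H * kappa H * (2 : ℝ) ^ (-((j : ℝ) * (1 + 2 * H))) := by

  obtain ⟨hH0, hH1⟩ := hH
  obtain ⟨C, hC⟩ := hψ.bdd
  have hC0 : 0 ≤ C := (abs_nonneg _).trans (hC 0)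
  have hS0 : (0:ℝ) ≤ (S:ℝ) := Nat.cast_nonneg S
  have h2H : 0 < 2 * H := by linarith
  have hκ : 0 < kappa H := by
    have h1 : 0 < Real.Gamma (2 * H) := Real.Gamma_pos_of_pos h2H
    have h2 : 0 < Real.sin (π * H) :=
      Real.sin_pos_of_pos_of_lt_pi (mul_pos Real.pi_pos hH0)
        (mul_lt_of_lt_one_right Real.pi_pos hH1)
    exact div_pos Real.pi_pos (mul_pos (mul_pos hH0 h1) h2)
  set ν : Measure (ℝ × ℝ) := (volume : Measure ℝ).prod volume with hν
  set c : ℝ := (2 : ℝ) ^ j with hcdef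
  have hc : (0:ℝ) < c := by positivity
  set φ : ℝ → ℝ := fun u => (u + (k:ℝ)) / c with hφ
  have hφ_sub : ∀ u v : ℝ, φ u - φ v = (u - v) / c := by
    intro u v; rw [hφ]; ring
  have hXm : Measurable (Function.uncurry X) :=
    measurable_uncurry_of_continuous_of_measurable hX.cont hX.meas
  have hφm : Measurable φ := (measurable_id.add_const _).div_const _
  have hgm : Measurable (fun q : Ω × ℝ => ψ q.2 * X (φ q.2) q.1) := by
    apply Measurable.mul
    · exact hψ.meas.comp measurable_snd
    · exact hXm.comp ((hφm.comp measurable_snd).prodMk measurable_fst)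
  set Z : Ω → ℝ := fun ω => ∫ u, ψ u * X (φ u) ω with hZdef
  -- mean of X is zero
  have hmeanX : ∀ a : ℝ, ∫ ω, X a ω ∂P = 0 := by
    intro a
    obtain ⟨v, hv⟩ := hX.gauss 1 (fun _ => a) (fun _ => 1)
    have hXa : P.map (X a) = gaussianReal 0 v := by
      rw [← hv]
      congr 1
      funext ω
      simp
    have h2 : ∫ y, y ∂(P.map (X a)) = ∫ ω, X a ω ∂P :=
      integral_map (hX.meas a).aemeasurable aestronglyMeasurable_id
    rw [hXa, integral_id_gaussianReal_zero] at h2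
    exact h2.symm
  -- second moments
  have hcovself : ∀ a : ℝ, ∫ ω, X a ω * X a ω ∂P = σ^2 * kappa H * |a| ^ (2*H) := by
    intro a
    rw [hX.cov a a, sub_self, abs_zero, Real.zero_rpow (ne_of_gt h2H)]
    ring
  have hXsq : ∀ a : ℝ, a ≠ 0 → Integrable (fun ω => X a ω * X a ω) P := by
    intro a ha
    by_contra hni
    have h0 := integral_undef hni
    rw [hcovself a] at h0
    have hpos : (0:ℝ) < σ^2 * kappa H * |a| ^ (2*H) :=
      mul_pos (mul_pos (pow_pos hσ 2) hκ)
        (Real.rpow_pos_of_pos (abs_pos.mpr ha) _)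
    exact absurd h0 (ne_of_gt hpos)
  have hlint : ∀ a : ℝ, a ≠ 0 →
      ∫⁻ ω, ENNReal.ofReal (X a ω * X a ω) ∂P
        = ENNReal.ofReal (σ^2 * kappa H * |a| ^ (2*H)) := by
    intro a ha
    rw [← ofReal_integral_eq_lintegral_ofReal (hXsq a ha)
      (Filter.Eventually.of_forall fun ω => mul_self_nonneg _), hcovself a]
  -- uniform bound over the box
  set B : ℝ := ((S:ℝ) + |(k:ℝ)|) / c with hB
  have hB0 : (0:ℝ) ≤ B := by positivity
  have hφbd : ∀ u ∈ Set.Icc (0:ℝ) (S:ℝ), |φ u| ≤ B := by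
    intro u hu
    rw [hφ, hB, abs_div, abs_of_pos hc]
    gcongr
    calc |u + (k:ℝ)| ≤ |u| + |(k:ℝ)| := abs_add_le _ _
      _ ≤ (S:ℝ) + |(k:ℝ)| := by
          rw [abs_of_nonneg hu.1]; linarith [hu.2]
  set M : ℝ := σ^2 * kappa H * B ^ (2*H) with hM
  have hM0 : 0 ≤ M := by
    rw [hM]
    exact mul_nonneg (mul_nonneg (sq_nonneg _) hκ.le) (Real.rpow_nonneg hB0 _)
  have hL2bd : ∀ u ∈ Set.Icc (0:ℝ) (S:ℝ), σ^2 * kappa H * |φ u| ^ (2*H) ≤ M := by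
    intro u hu
    rw [hM]
    exact mul_le_mul_of_nonneg_left
      (Real.rpow_le_rpow (abs_nonneg _) (hφbd u hu) h2H.le)
      (mul_nonneg (sq_nonneg _) hκ.le)
  have hφne : ∀ u : ℝ, u ≠ -(k:ℝ) → φ u ≠ 0 := by
    intro u hu h0
    rw [hφ] at h0
    apply hu
    have : u + (k:ℝ) = 0 := by
      field_simp at h0
      linarith [h0]
    linarith
  -- null coordinates
  have hae : ∀ᵐ u : ℝ ∂(volume : Measure ℝ), u ≠ -(k:ℝ) := by
    rw [ae_iff]
    simp only [not_not, Set.setOf_eq_eq_singleton]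
    exact Real.volume_singleton
  -- integrability of the single-variable kernel over P ⊗ volume
  have hginta : Integrable (fun q : Ω × ℝ => ψ q.2 * X (φ q.2) q.1)
      (P.prod (volume : Measure ℝ)) := by
    refine integrable_of_inner_bound (s := Set.Icc (0:ℝ) (S:ℝ)) hgm measurableSet_Icc
      (by rw [Real.volume_Icc]; exact ENNReal.ofReal_ne_top)
      (K := ENNReal.ofReal C * (1 + ENNReal.ofReal M))
      (ENNReal.mul_ne_top ENNReal.ofReal_ne_top
        (by simp [ENNReal.add_ne_top]))
      ?_
    filter_upwards [hae] with u hu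
    by_cases hbu : u ∈ Set.Icc (0:ℝ) (S:ℝ)
    · rw [Set.indicator_of_mem hbu]
      have ha : φ u ≠ 0 := hφne u hu
      have hptw : ∀ ω : Ω, ‖ψ u * X (φ u) ω‖
          ≤ C * (1 + X (φ u) ω * X (φ u) ω) := by
        intro ω
        rw [Real.norm_eq_abs, abs_mul]
        have h2 : |X (φ u) ω| ≤ 1 + X (φ u) ω * X (φ u) ω := by
          nlinarith [sq_nonneg (|X (φ u) ω| - 1), sq_abs (X (φ u) ω),
            abs_nonneg (X (φ u) ω)]
        exact mul_le_mul (hC u) h2 (abs_nonneg _) hC0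
      calc ∫⁻ ω, ENNReal.ofReal ‖ψ u * X (φ u) ω‖ ∂P
          ≤ ∫⁻ ω, ENNReal.ofReal (C * (1 + X (φ u) ω * X (φ u) ω)) ∂P :=
            lintegral_mono fun ω => ENNReal.ofReal_le_ofReal (hptw ω)
        _ = ENNReal.ofReal C
            * ∫⁻ ω, (1 + ENNReal.ofReal (X (φ u) ω * X (φ u) ω)) ∂P := by
            simp_rw [ENNReal.ofReal_mul hC0,
              ENNReal.ofReal_add zero_le_one (mul_self_nonneg _), ENNReal.ofReal_one]
            rw [lintegral_const_mul (f := fun ω => 1 + ENNReal.ofReal (X (φ u) ω * X (φ u) ω)) _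
              (measurable_const.add (((hX.meas _).mul (hX.meas _)).ennreal_ofReal))]
        _ = ENNReal.ofReal C
            * (1 + ENNReal.ofReal (σ^2 * kappa H * |φ u| ^ (2*H))) := by
            rw [lintegral_add_left measurable_const, lintegral_const,
              measure_univ, mul_one, hlint _ ha]
        _ ≤ ENNReal.ofReal C * (1 + ENNReal.ofReal M) :=
            mul_le_mul_right (add_le_add_right
              (ENNReal.ofReal_le_ofReal (hL2bd u hbu)) 1) _
    · have h0 : ∀ ω : Ω, ψ u * X (φ u) ω = 0 := by
        intro ω; rw [hψ.supp u hbu, zero_mul]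
      simp only [h0, norm_zero, ENNReal.ofReal_zero, lintegral_zero]
      exact zero_le
  -- mean of Z is zero
  have hZmean : ∫ ω, Z ω ∂P = 0 := by
    have h1 : ∫ x, ∫ y, ψ y * X (φ y) x ∂(volume : Measure ℝ) ∂P
        = ∫ y, ∫ x, ψ y * X (φ y) x ∂P ∂(volume : Measure ℝ) := by
      rw [← integral_prod _ hginta, integral_prod_symm _ hginta]
    calc ∫ ω, Z ω ∂P
        = ∫ x, ∫ y, ψ y * X (φ y) x ∂(volume : Measure ℝ) ∂P := rfl
      _ = ∫ y, ∫ x, ψ y * X (φ y) x ∂P ∂(volume : Measure ℝ) := h1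
      _ = 0 := by simp_rw [integral_const_mul, hmeanX, mul_zero, integral_zero]
  -- the product kernel
  set F : Ω × (ℝ × ℝ) → ℝ := fun q =>
    (ψ q.2.1 * X (φ q.2.1) q.1) * (ψ q.2.2 * X (φ q.2.2) q.1) with hF
  have hFm : Measurable F :=
    (hgm.comp (measurable_fst.prodMk (measurable_fst.comp measurable_snd))).mul
      (hgm.comp (measurable_fst.prodMk (measurable_snd.comp measurable_snd)))
  set box : Set (ℝ × ℝ) := Set.Icc (0:ℝ) (S:ℝ) ×ˢ Set.Icc (0:ℝ) (S:ℝ) with hbox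
  have hbox_meas : MeasurableSet box := measurableSet_Icc.prod measurableSet_Icc
  have hbox_fin : ((volume : Measure ℝ).prod volume) box ≠ ⊤ := by
    rw [hbox, Measure.prod_prod, Real.volume_Icc]
    exact ENNReal.mul_ne_top ENNReal.ofReal_ne_top ENNReal.ofReal_ne_top
  have haeP : ∀ᵐ p : ℝ × ℝ ∂((volume : Measure ℝ).prod volume),
      p.1 ≠ -(k:ℝ) ∧ p.2 ≠ -(k:ℝ) := by
    have h1 : ((volume : Measure ℝ).prod volume) {p : ℝ × ℝ | p.1 = -(k:ℝ)} = 0 := by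
      have : {p : ℝ × ℝ | p.1 = -(k:ℝ)}
          = ({-(k:ℝ)} : Set ℝ) ×ˢ (Set.univ : Set ℝ) := by
        ext p
        simp only [Set.mem_prod, Set.mem_singleton_iff, Set.mem_univ, and_true,
          Set.mem_setOf_eq]
      rw [this, Measure.prod_prod, Real.volume_singleton, zero_mul]
    have h2 : ((volume : Measure ℝ).prod volume) {p : ℝ × ℝ | p.2 = -(k:ℝ)} = 0 := by
      have : {p : ℝ × ℝ | p.2 = -(k:ℝ)}
          = (Set.univ : Set ℝ) ×ˢ ({-(k:ℝ)} : Set ℝ) := by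
        ext p
        simp only [Set.mem_prod, Set.mem_singleton_iff, Set.mem_univ, true_and,
          Set.mem_setOf_eq]
      rw [this, Measure.prod_prod, Real.volume_singleton, mul_zero]
    have g1 : ∀ᵐ p : ℝ × ℝ ∂((volume : Measure ℝ).prod volume), p.1 ≠ -(k:ℝ) := by
      rw [ae_iff]; simpa only [not_not] using h1
    have g2 : ∀ᵐ p : ℝ × ℝ ∂((volume : Measure ℝ).prod volume), p.2 ≠ -(k:ℝ) := by
      rw [ae_iff]; simpa only [not_not] using h2
    exact g1.and g2
  have hFint : Integrable F (P.prod ((volume : Measure ℝ).prod volume)) := by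
    refine integrable_of_inner_bound hFm hbox_meas hbox_fin
      (K := ENNReal.ofReal (C*C) * (ENNReal.ofReal M + ENNReal.ofReal M))
      (ENNReal.mul_ne_top ENNReal.ofReal_ne_top
        (by simp [ENNReal.add_ne_top]))
      ?_
    filter_upwards [haeP] with p hp
    obtain ⟨hp1, hp2⟩ := hp
    by_cases hbp : p ∈ box
    · rw [Set.indicator_of_mem hbp]
      rw [hbox, Set.mem_prod] at hbp
      obtain ⟨hu, hv⟩ := hbp
      have ha : φ p.1 ≠ 0 := hφne _ hp1
      have hb : φ p.2 ≠ 0 := hφne _ hp2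
      have hptw : ∀ ω : Ω, ‖F (ω, p)‖
          ≤ C*C*(X (φ p.1) ω * X (φ p.1) ω + X (φ p.2) ω * X (φ p.2) ω) := by
        intro ω
        rw [hF, Real.norm_eq_abs]
        have habs : |(ψ p.1 * X (φ p.1) ω) * (ψ p.2 * X (φ p.2) ω)|
            = |ψ p.1| * |ψ p.2| * (|X (φ p.1) ω| * |X (φ p.2) ω|) := by
          rw [abs_mul, abs_mul, abs_mul]; ring
        rw [habs]
        have h2 : |X (φ p.1) ω| * |X (φ p.2) ω|
            ≤ X (φ p.1) ω * X (φ p.1) ω + X (φ p.2) ω * X (φ p.2) ω := by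
          nlinarith [sq_nonneg (|X (φ p.1) ω| - |X (φ p.2) ω|),
            sq_abs (X (φ p.1) ω), sq_abs (X (φ p.2) ω),
            abs_nonneg (X (φ p.1) ω), abs_nonneg (X (φ p.2) ω)]
        exact mul_le_mul (mul_le_mul (hC _) (hC _) (abs_nonneg _) hC0) h2
          (mul_nonneg (abs_nonneg _) (abs_nonneg _)) (mul_nonneg hC0 hC0)
      calc ∫⁻ ω, ENNReal.ofReal ‖F (ω, p)‖ ∂P
          ≤ ∫⁻ ω, ENNReal.ofReal (C*C*(X (φ p.1) ω * X (φ p.1) ω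
              + X (φ p.2) ω * X (φ p.2) ω)) ∂P :=
            lintegral_mono fun ω => ENNReal.ofReal_le_ofReal (hptw ω)
        _ = ENNReal.ofReal (C*C) * ∫⁻ ω,
              (ENNReal.ofReal (X (φ p.1) ω * X (φ p.1) ω)
                + ENNReal.ofReal (X (φ p.2) ω * X (φ p.2) ω)) ∂P := by
            simp_rw [ENNReal.ofReal_mul (mul_nonneg hC0 hC0),
              ENNReal.ofReal_add (mul_self_nonneg _) (mul_self_nonneg _)]
            rw [lintegral_const_mul (f := fun ω => ENNReal.ofReal (X (φ p.1) ω * X (φ p.1) ω)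
                + ENNReal.ofReal (X (φ p.2) ω * X (φ p.2) ω)) _
              ((((hX.meas _).mul (hX.meas _)).ennreal_ofReal).add
                (((hX.meas _).mul (hX.meas _)).ennreal_ofReal))]
        _ = ENNReal.ofReal (C*C)
            * (ENNReal.ofReal (σ^2 * kappa H * |φ p.1| ^ (2*H))
              + ENNReal.ofReal (σ^2 * kappa H * |φ p.2| ^ (2*H))) := by
            rw [lintegral_add_left (f := fun ω => ENNReal.ofReal (X (φ p.1) ω * X (φ p.1) ω))
                (((hX.meas _).mul (hX.meas _)).ennreal_ofReal),
              hlint _ ha, hlint _ hb]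
        _ ≤ ENNReal.ofReal (C*C) * (ENNReal.ofReal M + ENNReal.ofReal M) :=
            mul_le_mul_right (add_le_add
              (ENNReal.ofReal_le_ofReal (hL2bd _ hu))
              (ENNReal.ofReal_le_ofReal (hL2bd _ hv))) _
    · have h0 : ∀ ω : Ω, F (ω, p) = 0 := by
        intro ω
        rw [hbox, Set.mem_prod] at hbp
        push_neg at hbp
        rw [hF]
        by_cases hu : p.1 ∈ Set.Icc (0:ℝ) (S:ℝ)
        · simp [hψ.supp _ (hbp hu)]
        · simp [hψ.supp _ hu]
      simp only [h0, norm_zero, ENNReal.ofReal_zero, lintegral_zero]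
      exact zero_le
  -- Z² as a double integral
  have hZsq : ∀ ω : Ω, (∫ p : ℝ × ℝ, F (ω, p) ∂((volume : Measure ℝ).prod volume))
      = Z ω * Z ω := fun ω =>
    integral_prod_mul (fun u => ψ u * X (φ u) ω) (fun u => ψ u * X (φ u) ω)
  have hIZ2 : Integrable (fun ω => Z ω * Z ω) P :=
    (hFint.integral_prod_left).congr (Filter.Eventually.of_forall hZsq)
  -- key double-integral identity
  have hkey := key_double_integral ψ S hψ.meas C hC hψ.supp hψ.van0 h2H
    φ hφm c hc hφ_sub B hφbd
  have hEZ2 : ∫ ω, Z ω * Z ω ∂P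
      = σ^2 * kappa H / 2 * (-((c ^ (2*H))⁻¹ * ∫ p : ℝ × ℝ,
          ψ p.1 * ψ p.2 * |p.1 - p.2| ^ (2*H) ∂((volume : Measure ℝ).prod volume))) := by
    have e1 : ∀ p : ℝ × ℝ, ∫ ω, F (ω, p) ∂P
        = σ^2 * kappa H / 2 * (ψ p.1 * ψ p.2 * (|φ p.1| ^ (2*H) + |φ p.2| ^ (2*H)
            - |φ p.1 - φ p.2| ^ (2*H))) := by
      intro p
      have hcongr : (fun ω => F (ω, p))
          = fun ω => (ψ p.1 * ψ p.2) * (X (φ p.1) ω * X (φ p.2) ω) := by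
        funext ω; rw [hF]; ring
      rw [hcongr, integral_const_mul, hX.cov]
      ring
    calc ∫ ω, Z ω * Z ω ∂P
        = ∫ ω, (∫ p : ℝ × ℝ, F (ω, p) ∂((volume : Measure ℝ).prod volume)) ∂P :=
          integral_congr_ae (Filter.Eventually.of_forall fun ω => (hZsq ω).symm)
      _ = ∫ q, F q ∂(P.prod ((volume : Measure ℝ).prod volume)) :=
          (integral_prod _ hFint).symm
      _ = ∫ p : ℝ × ℝ, (∫ ω, F (ω, p) ∂P) ∂((volume : Measure ℝ).prod volume) :=
          integral_prod_symm _ hFint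
      _ = σ^2 * kappa H / 2 * (-((c ^ (2*H))⁻¹ * ∫ p : ℝ × ℝ,
            ψ p.1 * ψ p.2 * |p.1 - p.2| ^ (2*H) ∂((volume : Measure ℝ).prod volume))) := by
          simp_rw [e1]
          rw [integral_const_mul, hkey.1]
  -- cpsi in terms of the double integral
  have hkey0 := key_double_integral ψ S hψ.meas C hC hψ.supp hψ.van0 h2H
    id measurable_id 1 one_pos (fun u v => by simp) (S:ℝ)
    (fun u hu => by rw [id_eq, abs_of_nonneg hu.1]; exact hu.2)
  have hcpsi : cpsi ψ H = -(1/2) * ∫ p : ℝ × ℝ,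
      ψ p.1 * ψ p.2 * |p.1 - p.2| ^ (2*H) ∂((volume : Measure ℝ).prod volume) := by
    have hfun : (fun p : ℝ × ℝ => ψ p.1 * ψ p.2 * (|id p.1| ^ (2*H) + |id p.2| ^ (2*H)
        - |id p.1 - id p.2| ^ (2*H)))
        = fun p : ℝ × ℝ => ψ p.1 * ψ p.2 * (|p.2| ^ (2*H) + |p.1| ^ (2*H)
            - |p.2 - p.1| ^ (2*H)) := by
      funext p
      simp only [id_eq]
      rw [abs_sub_comm p.1 p.2]
      ring
    have hint0 : Integrable (fun p : ℝ × ℝ => ψ p.1 * ψ p.2 * (|p.2| ^ (2*H)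
        + |p.1| ^ (2*H) - |p.2 - p.1| ^ (2*H))) ((volume : Measure ℝ).prod volume) :=
      hfun ▸ hkey0.2
    have hval0 : ∫ p : ℝ × ℝ, ψ p.1 * ψ p.2 * (|p.2| ^ (2*H) + |p.1| ^ (2*H)
        - |p.2 - p.1| ^ (2*H)) ∂((volume : Measure ℝ).prod volume)
        = -(((1:ℝ) ^ (2*H))⁻¹ * ∫ p : ℝ × ℝ,
            ψ p.1 * ψ p.2 * |p.1 - p.2| ^ (2*H) ∂((volume : Measure ℝ).prod volume)) := by
      rw [← hfun]
      exact hkey0.1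
    calc cpsi ψ H
        = (1/2) * ∫ p : ℝ × ℝ, ψ p.1 * ψ p.2 * (|p.2| ^ (2*H) + |p.1| ^ (2*H)
            - |p.2 - p.1| ^ (2*H)) ∂((volume : Measure ℝ).prod volume) := by
          rw [cpsi]
          congr 1
          exact (integral_prod _ hint0).symm
      _ = -(1/2) * ∫ p : ℝ × ℝ,
            ψ p.1 * ψ p.2 * |p.1 - p.2| ^ (2*H) ∂((volume : Measure ℝ).prod volume) := by
          rw [hval0, Real.one_rpow, inv_one, one_mul]
          ring
  -- change of variables for dcoef
  have hdeq : dcoef ψ X j k = fun ω => ((2:ℝ) ^ ((j:ℝ)/2) * c⁻¹) * Z ω := by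
    funext ω
    rw [dcoef]
    have h1 : ∀ s : ℝ, wavFn ψ j k s * X s ω
        = (2:ℝ) ^ ((j:ℝ)/2) * ((fun x => ψ (x - (k:ℝ)) * X (x / c) ω) (c * s)) := by
      intro s
      rw [wavFn, ← hcdef]
      have hs : c * s / c = s := by field_simp
      simp only [hs]
      ring
    simp_rw [h1]
    rw [integral_const_mul, Measure.integral_comp_mul_left
      (fun x => ψ (x - (k:ℝ)) * X (x / c) ω) c]
    rw [smul_eq_mul, abs_of_pos (inv_pos.mpr hc)]
    have h2 : ∫ x, ψ (x - (k:ℝ)) * X (x / c) ω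
        = ∫ u, ψ u * X ((u + (k:ℝ)) / c) ω := by
      rw [← integral_add_right_eq_self (fun x => ψ (x - (k:ℝ)) * X (x / c) ω) (k:ℝ)]
      simp only [add_sub_cancel_right]
    rw [h2]
    rw [hZdef, hφ]
    ring
  -- power computation
  have hc2 : c = (2:ℝ) ^ ((j:ℝ)) := by
    rw [hcdef]; exact (Real.rpow_natCast 2 j).symm
  have hpow : (((2:ℝ) ^ ((j:ℝ)/2)) * c⁻¹)^2 * (c ^ (2*H))⁻¹
      = (2:ℝ) ^ (-((j:ℝ) * (1 + 2*H))) := by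
    have hr2 : ((2:ℝ) ^ ((j:ℝ)/2))^2 = c := by
      rw [hc2, ← Real.rpow_natCast ((2:ℝ) ^ ((j:ℝ)/2)) 2,
        ← Real.rpow_mul (by norm_num : (0:ℝ) ≤ 2)]
      norm_num
    rw [mul_pow, hr2]
    have h3 : c * (c⁻¹)^2 = c⁻¹ := by field_simp
    rw [h3, ← mul_inv]
    have h4 : c * c ^ (2*H) = (2:ℝ) ^ ((j:ℝ) * (1 + 2*H)) := by
      rw [hc2, ← Real.rpow_mul (by norm_num : (0:ℝ) ≤ 2),
        ← Real.rpow_add (by norm_num : (0:ℝ) < 2)]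
      congr 1
      ring
    rw [h4, ← Real.rpow_neg (by norm_num : (0:ℝ) ≤ 2)]
  -- conclusion
  rw [hdeq]
  have hmean2 : ∫ ω, ((2:ℝ) ^ ((j:ℝ)/2) * c⁻¹) * Z ω ∂P = 0 := by
    rw [integral_const_mul, hZmean, mul_zero]
  have hint2 : Integrable (fun ω => (((2:ℝ) ^ ((j:ℝ)/2) * c⁻¹) * Z ω)^2) P := by
    have heq : (fun ω => (((2:ℝ) ^ ((j:ℝ)/2) * c⁻¹) * Z ω)^2)
        = fun ω => ((2:ℝ) ^ ((j:ℝ)/2) * c⁻¹)^2 * (Z ω * Z ω) := by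
      funext ω; ring
    rw [heq]
    exact hIZ2.const_mul _
  rw [variance_eq_integral_sq hmean2 hint2]
  have heq2 : (fun ω => (((2:ℝ) ^ ((j:ℝ)/2) * c⁻¹) * Z ω)^2)
      = fun ω => ((2:ℝ) ^ ((j:ℝ)/2) * c⁻¹)^2 * (Z ω * Z ω) := by
    funext ω; ring
  calc ∫ ω, (((2:ℝ) ^ ((j:ℝ)/2) * c⁻¹) * Z ω)^2 ∂P
      = ∫ ω, ((2:ℝ) ^ ((j:ℝ)/2) * c⁻¹)^2 * (Z ω * Z ω) ∂P := by rw [heq2]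
    _ = ((2:ℝ) ^ ((j:ℝ)/2) * c⁻¹)^2 * ∫ ω, Z ω * Z ω ∂P := integral_const_mul _ _
    _ = σ ^ 2 * cpsi ψ H * kappa H * (2:ℝ) ^ (-((j:ℝ) * (1 + 2*H))) := by
        rw [hEZ2, hcpsi, ← hpow]
        ring


end
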